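/- Let q be a prime power, r ≥ 2, ℓ ≥ 1, n ≥ 1 integers, and let H_1, …, H_n be ℓ-dimensional 𝔽_q-subspaces of V = 𝔽_q^{rℓ} satisfying the r-wise spanning condition. Fix i ∈ {1,…,n} and let W ≤ V be an 𝔽_q-subspace with dim W = (r-1)ℓ. If ∑_{j≠i} dim(W ∩ H_j) = (r−1)·(q^ℓ − 1)/(q − 1), then the number of indices j ≠ i with dim(W ∩ H_j) = 1 equals (r−1)·(q^ℓ − 1)/(q − 1), and consequently n ≥ 1 + (r−1)·(q^ℓ − 1)/(q − 1). -/

import Mathlib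

open Module Finset

private lemma geom_helper (q : ℕ) (hq : 2 ≤ q) : ∀ d : ℕ, (q - 1) * d + 1 ≤ q ^ d := by
  intro d
  induction d with
  | zero => simp
  | succ d ih =>
    have h1 : 1 ≤ q ^ d := Nat.one_le_pow _ _ (by omega)
    have hstep : (q - 1) * (d + 1) = (q - 1) * d + (q - 1) := by ring
    have hq1 : q - 1 + 1 = q := by omega
    have hmul : q ^ (d + 1) = (q - 1) * q ^ d + q ^ d := by
      calc q ^ (d + 1) = q * q ^ d := by ring
        _ = (q - 1 + 1) * q ^ d := by rw [hq1]
        _ = (q - 1) * q ^ d + q ^ d := by ring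
    have hle : (q - 1) ≤ (q - 1) * q ^ d := Nat.le_mul_of_pos_right _ (by omega)
    omega

private lemma geom_helper_strict (q : ℕ) (hq : 2 ≤ q) :
    ∀ d : ℕ, 2 ≤ d → (q - 1) * d + 1 < q ^ d := by
  intro d
  induction d with
  | zero => omega
  | succ d ih =>
    intro hd
    have h1 : 1 ≤ q ^ d := Nat.one_le_pow _ _ (by omega)
    have hstep : (q - 1) * (d + 1) = (q - 1) * d + (q - 1) := by ring
    have hq1 : q - 1 + 1 = q := by omega
    have hmul : q ^ (d + 1) = (q - 1) * q ^ d + q ^ d := by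
      calc q ^ (d + 1) = q * q ^ d := by ring
        _ = (q - 1 + 1) * q ^ d := by rw [hq1]
        _ = (q - 1) * q ^ d + q ^ d := by ring
    have hle : (q - 1) ≤ (q - 1) * q ^ d := Nat.le_mul_of_pos_right _ (by omega)
    rcases Nat.lt_or_ge d 2 with hd2 | hd2
    · -- d = 1
      have hd1 : d = 1 := by omega
      subst hd1
      have hp1 : q ^ 1 = q := pow_one q
      have h2 : 2 * (q - 1) ≤ (q - 1) * q ^ 1 := by
        rw [hp1]; nlinarith
      omega
    · have ihs := ih hd2
      have hge : (q - 1) * d + 1 ≤ (q - 1) * q ^ d := by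
        calc (q - 1) * d + 1 ≤ q ^ d := geom_helper q hq d
          _ ≤ (q - 1) * q ^ d := Nat.le_mul_of_pos_left _ (by omega)
      omega

set_option maxHeartbeats 1000000 in
/-- Equality case: incidence count and necessary length bound.
If `∑_{j ≠ i} dim (W ⊓ H j) = (r-1)·(q^ℓ-1)/(q-1)`, then the number of indices
`j ≠ i` with `dim (W ⊓ H j) = 1` equals `(r-1)·(q^ℓ-1)/(q-1)`, and consequently
`n ≥ 1 + (r-1)·(q^ℓ-1)/(q-1)`. -/
theorem incidence_multiplicity_equality_count_and_length
    (q r ℓ n : ℕ) (hr : 2 ≤ r) (hℓ : 1 ≤ ℓ) (hn : 1 ≤ n)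
    (F : Type*) [Field F] [Fintype F] (hq : Fintype.card F = q)
    (H : Fin n → Submodule F (Fin (r * ℓ) → F))
    (hdim : ∀ j, finrank F (H j) = ℓ)
    (hspan : ∀ J : Finset (Fin n), J.card = r → (⨆ j ∈ J, H j) = ⊤)
    (i : Fin n) (W : Submodule F (Fin (r * ℓ) → F))
    (hW : finrank F W = (r - 1) * ℓ)
    (heq : ∑ j ∈ Finset.univ.erase i, finrank F ↥(W ⊓ H j)
      = (r - 1) * ((q ^ ℓ - 1) / (q - 1))) :
    ((Finset.univ.erase i).filter
        fun j => finrank F ↥(W ⊓ H j) = 1).card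
      = (r - 1) * ((q ^ ℓ - 1) / (q - 1)) ∧
    1 + (r - 1) * ((q ^ ℓ - 1) / (q - 1)) ≤ n := by
  classical
  have hq2 : 2 ≤ q := hq ▸ Fintype.one_lt_card
  have hVrank : finrank F (Fin (r * ℓ) → F) = r * ℓ := Module.finrank_fin_fun F
  have hrl : (r - 1) * ℓ + ℓ = r * ℓ := by
    have h : r - 1 + 1 = r := by omega
    calc (r - 1) * ℓ + ℓ = (r - 1 + 1) * ℓ := by ring
    _ = r * ℓ := by rw [h]
  set J : Finset (Fin n) := Finset.univ.erase i with hJ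
  set t : ℕ := (q ^ ℓ - 1) / (q - 1) with htdef
  have hdvd : (q - 1) ∣ (q ^ ℓ - 1) := by
    simpa using Nat.sub_dvd_pow_sub_pow q 1 ℓ
  have ht : (q - 1) * t = q ^ ℓ - 1 := Nat.mul_div_cancel' hdvd
  letI : Finite (Module.Dual F (Fin (r * ℓ) → F)) :=
    Finite.of_injective _ DFunLike.coe_injective
  letI : Fintype (Module.Dual F (Fin (r * ℓ) → F)) := Fintype.ofFinite _
  -- cardinality of dual annihilators
  have cardAnn : ∀ U : Submodule F (Fin (r * ℓ) → F),
      (Finset.univ.filter (· ∈ U.dualAnnihilator)).card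
        = q ^ (r * ℓ - finrank F U) := by
    intro U
    have h1 : finrank F U.dualAnnihilator = r * ℓ - finrank F U := by
      have h2 := Submodule.finrank_quotient_add_finrank U
      rw [hVrank] at h2
      have h3 : finrank F U.dualAnnihilator
          = finrank F ((Fin (r * ℓ) → F) ⧸ U) :=
        (Subspace.quotEquivAnnihilator U).finrank_eq.symm
      omega
    calc (Finset.univ.filter (· ∈ U.dualAnnihilator)).card
        = Fintype.card U.dualAnnihilator := by
          rw [Fintype.card_subtype]
      _ = Fintype.card F ^ finrank F U.dualAnnihilator := Module.card_eq_pow_finrank (K := F) (V := U.dualAnnihilator)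
      _ = q ^ (r * ℓ - finrank F U) := by rw [hq, h1]
  -- the set of nonzero functionals vanishing on W
  set B : Finset (Module.Dual F (Fin (r * ℓ) → F)) :=
    (Finset.univ.filter (· ∈ W.dualAnnihilator)).erase 0 with hB
  have hBcard : B.card = q ^ ℓ - 1 := by
    rw [hB, Finset.card_erase_of_mem (by simp [Submodule.zero_mem]), cardAnn W, hW]
    have hexp : r * ℓ - (r - 1) * ℓ = ℓ := by omega
    rw [hexp]
  -- dimension of sup
  have hsup : ∀ j, finrank F ↥(W ⊔ H j) + finrank F ↥(W ⊓ H j) = r * ℓ := by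
    intro j
    have h0 := Submodule.finrank_sup_add_finrank_inf_eq W (H j)
    rw [hW, hdim j] at h0
    omega
  -- per-j cardinality
  have hjcard : ∀ j : Fin n,
      (B.filter (fun ψ => ψ ∈ (W ⊔ H j).dualAnnihilator)).card
        = q ^ (finrank F ↥(W ⊓ H j)) - 1 := by
    intro j
    have hmono : ∀ ψ : Module.Dual F (Fin (r * ℓ) → F),
        ψ ∈ (W ⊔ H j).dualAnnihilator → ψ ∈ W.dualAnnihilator := by
      intro ψ hψ
      rw [Submodule.mem_dualAnnihilator] at hψ ⊢
      exact fun w hw => hψ w (Submodule.mem_sup_left hw)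
    have hset : B.filter (fun ψ => ψ ∈ (W ⊔ H j).dualAnnihilator)
        = (Finset.univ.filter (· ∈ (W ⊔ H j).dualAnnihilator)).erase 0 := by
      ext ψ
      simp only [hB, Finset.mem_filter, Finset.mem_erase, Finset.mem_univ, true_and]
      constructor
      · rintro ⟨⟨hne, _⟩, hs⟩; exact ⟨hne, hs⟩
      · rintro ⟨hne, hs⟩; exact ⟨⟨hne, hmono ψ hs⟩, hs⟩
    rw [hset, Finset.card_erase_of_mem (by simp [Submodule.zero_mem]), cardAnn]
    have h0 := hsup j
    have hexp : r * ℓ - finrank F ↥(W ⊔ H j) = finrank F ↥(W ⊓ H j) := by omega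
    rw [hexp]
  -- the key double-counting bound
  have hbound : ∀ ψ ∈ B,
      (J.filter (fun j => ψ ∈ (W ⊔ H j).dualAnnihilator)).card ≤ r - 1 := by
    intro ψ hψ
    by_contra hcon
    have hcard : r ≤ (J.filter (fun j => ψ ∈ (W ⊔ H j).dualAnnihilator)).card := by
      omega
    obtain ⟨C, hCsub, hCcard⟩ := Finset.exists_subset_card_eq hcard
    have hker : ∀ j ∈ C, H j ≤ LinearMap.ker ψ := by
      intro j hj
      have hjmem := hCsub hj
      rw [Finset.mem_filter] at hjmem
      have hann := hjmem.2
      rw [Submodule.mem_dualAnnihilator] at hann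
      intro x hx
      exact hann x (Submodule.mem_sup_right hx)
    have htop : (⊤ : Submodule F (Fin (r * ℓ) → F)) ≤ LinearMap.ker ψ := by
      rw [← hspan C hCcard]
      exact iSup_le fun j => iSup_le fun hj => hker j hj
    have hzero : ψ = 0 := LinearMap.ker_eq_top.mp (top_le_iff.mp htop)
    exact (Finset.mem_erase.mp hψ).1 hzero
  have key : ∑ j ∈ J, (q ^ (finrank F ↥(W ⊓ H j)) - 1) ≤ (q ^ ℓ - 1) * (r - 1) := by
    calc ∑ j ∈ J, (q ^ (finrank F ↥(W ⊓ H j)) - 1)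
        = ∑ j ∈ J, (B.filter (fun ψ => ψ ∈ (W ⊔ H j).dualAnnihilator)).card :=
          Finset.sum_congr rfl fun j _ => (hjcard j).symm
      _ = ∑ j ∈ J, ∑ ψ ∈ B, (if ψ ∈ (W ⊔ H j).dualAnnihilator then 1 else 0) :=
          Finset.sum_congr rfl fun j _ => Finset.card_filter _ _
      _ = ∑ ψ ∈ B, ∑ j ∈ J, (if ψ ∈ (W ⊔ H j).dualAnnihilator then 1 else 0) :=
          Finset.sum_comm
      _ = ∑ ψ ∈ B, (J.filter (fun j => ψ ∈ (W ⊔ H j).dualAnnihilator)).card :=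
          Finset.sum_congr rfl fun ψ _ => (Finset.card_filter _ _).symm
      _ ≤ ∑ _ψ ∈ B, (r - 1) := Finset.sum_le_sum hbound
      _ = (q ^ ℓ - 1) * (r - 1) := by rw [Finset.sum_const, hBcard, smul_eq_mul]
  -- termwise lower bound and equality analysis
  have hterm : ∀ j ∈ J, (q - 1) * finrank F ↥(W ⊓ H j)
      ≤ q ^ (finrank F ↥(W ⊓ H j)) - 1 := by
    intro j _
    have h1 := geom_helper q hq2 (finrank F ↥(W ⊓ H j))
    omega
  have h1 : ∑ j ∈ J, (q - 1) * finrank F ↥(W ⊓ H j) = (q ^ ℓ - 1) * (r - 1) := by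
    rw [← Finset.mul_sum, heq]
    calc (q - 1) * ((r - 1) * t) = (q - 1) * t * (r - 1) := by ring
      _ = (q ^ ℓ - 1) * (r - 1) := by rw [ht]
  have hsum_eq : ∑ j ∈ J, (q - 1) * finrank F ↥(W ⊓ H j)
      = ∑ j ∈ J, (q ^ (finrank F ↥(W ⊓ H j)) - 1) := by
    have h2 := Finset.sum_le_sum hterm
    omega
  have hall := (Finset.sum_eq_sum_iff_of_le hterm).mp hsum_eq
  have hle1 : ∀ j ∈ J, finrank F ↥(W ⊓ H j) ≤ 1 := by
    intro j hj
    by_contra hcon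
    have h2 : 2 ≤ finrank F ↥(W ⊓ H j) := by omega
    have h3 := geom_helper_strict q hq2 _ h2
    have h4 := hall j hj
    omega
  -- count indices with dim = 1
  have hcount : (J.filter (fun j => finrank F ↥(W ⊓ H j) = 1)).card
      = ∑ j ∈ J, finrank F ↥(W ⊓ H j) := by
    rw [Finset.card_filter]
    refine Finset.sum_congr rfl fun j hj => ?_
    have := hle1 j hj
    by_cases h : finrank F ↥(W ⊓ H j) = 1
    · simp [h]
    · simp only [h, if_false]
      omega
  have hJcard : J.card = n - 1 := by
    rw [hJ, Finset.card_erase_of_mem (Finset.mem_univ i), Finset.card_univ,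
      Fintype.card_fin]
  constructor
  · rw [hcount, heq]
  · have hfle : (J.filter (fun j => finrank F ↥(W ⊓ H j) = 1)).card ≤ J.card :=
      Finset.card_le_card (Finset.filter_subset _ _)
    rw [hcount, heq, hJcard] at hfle
    omega
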